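/- Let F be the 6×6 real matrix with rows (0,1,0,0,0,0), (1,2,2,1,0,0), (0,2,2,0,1,1), (0,1,0,0,0,0), (0,0,1,0,0,0), (0,0,1,0,0,0), and let v = (1, 2+√6, 2+√6, 1, 1, 1) ∈ ℝ⁶. Then F·v = (2+√6)·v, v has strictly positive entries, and every complex eigenvalue of F has absolute value at most 2+√6 (i.e. 2+√6 is the Perron–Frobenius eigenvalue of F). -/

import Mathlib

open Matrix

/-- The fundamental annular matrix `F_{0,1}` of the exceptional quantum subgroup
`E₄(G₂)` (action of the basic representation of G2 at level 4). -/
noncomputable def F : Matrix (Fin 6) (Fin 6) ℝ :=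
  !![0, 1, 0, 0, 0, 0;
     1, 2, 2, 1, 0, 0;
     0, 2, 2, 0, 1, 1;
     0, 1, 0, 0, 0, 0;
     0, 0, 1, 0, 0, 0;
     0, 0, 1, 0, 0, 0]

/-- The vector of quantum dimensions of the simple objects of `E₄(G₂)`. -/
noncomputable def v : Fin 6 → ℝ := ![1, 2 + Real.sqrt 6, 2 + Real.sqrt 6, 1, 1, 1]

private lemma cv5 {α : Type*} (a : α) (s : Fin 5 → α) : Matrix.vecCons a s 5 = s 4 := rfl
private lemma cv4 {α : Type*} (a : α) (s : Fin 4 → α) : Matrix.vecCons a s 4 = s 3 := rfl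
private lemma cv3 {α : Type*} (a : α) (s : Fin 3 → α) : Matrix.vecCons a s 3 = s 2 := rfl
private lemma cv2 {α : Type*} (a : α) (s : Fin 2 → α) : Matrix.vecCons a s 2 = s 1 := rfl
private lemma cv1 {α : Type*} (a : α) (s : Fin 1 → α) : Matrix.vecCons a s 1 = s 0 := rfl
private lemma vec6_five {α : Type*} (a b c d e f : α) : ![a, b, c, d, e, f] 5 = f := rfl
private lemma vec6_four {α : Type*} (a b c d e f : α) : ![a, b, c, d, e, f] 4 = e := rfl


/-- `2+√6` is the Perron–Frobenius eigenvalue of `F`, with strictly positive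
eigenvector `v`: `F·v = (2+√6)·v`, `v > 0`, and every complex eigenvalue of `F`
has absolute value at most `2+√6`. -/
theorem perron_frobenius_E4_G2 :
    F.mulVec v = (2 + Real.sqrt 6) • v ∧
    (∀ i, 0 < v i) ∧
    (∀ (μ : ℂ) (w : Fin 6 → ℂ), w ≠ 0 →
      (F.map (Complex.ofReal)).mulVec w = μ • w → ‖μ‖ ≤ 2 + Real.sqrt 6) := by
  have h6 : Real.sqrt 6 * Real.sqrt 6 = 6 := Real.mul_self_sqrt (by norm_num)
  have hs : (0:ℝ) ≤ Real.sqrt 6 := Real.sqrt_nonneg 6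
  have hv : ∀ i, 0 < v i := by
    intro i; fin_cases i <;> simp [v, vec6_five, vec6_four] <;> nlinarith
  have hFnn : ∀ i j, 0 ≤ F i j := by
    intro i j; fin_cases i <;> fin_cases j <;> norm_num [F, vec6_five, vec6_four]
  have h1 : F.mulVec v = (2 + Real.sqrt 6) • v := by
    funext i
    have expand : F.mulVec v i = ∑ j, F i j * v j := rfl
    have hrhs : ((2 + Real.sqrt 6) • v) i = (2 + Real.sqrt 6) * v i := rfl
    rw [expand, hrhs, Fin.sum_univ_six]
    fin_cases i
    · show (0:ℝ)*1 + 1*(2+Real.sqrt 6) + 0*(2+Real.sqrt 6) + 0*1 + 0*1 + 0*1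
          = (2+Real.sqrt 6)*1
      ring
    · show (1:ℝ)*1 + 2*(2+Real.sqrt 6) + 2*(2+Real.sqrt 6) + 1*1 + 0*1 + 0*1
          = (2+Real.sqrt 6)*(2+Real.sqrt 6)
      nlinarith [h6]
    · show (0:ℝ)*1 + 2*(2+Real.sqrt 6) + 2*(2+Real.sqrt 6) + 0*1 + 1*1 + 1*1
          = (2+Real.sqrt 6)*(2+Real.sqrt 6)
      nlinarith [h6]
    · show (0:ℝ)*1 + 1*(2+Real.sqrt 6) + 0*(2+Real.sqrt 6) + 0*1 + 0*1 + 0*1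
          = (2+Real.sqrt 6)*1
      ring
    · show (0:ℝ)*1 + 0*(2+Real.sqrt 6) + 1*(2+Real.sqrt 6) + 0*1 + 0*1 + 0*1
          = (2+Real.sqrt 6)*1
      ring
    · show (0:ℝ)*1 + 0*(2+Real.sqrt 6) + 1*(2+Real.sqrt 6) + 0*1 + 0*1 + 0*1
          = (2+Real.sqrt 6)*1
      ring
  refine ⟨h1, hv, ?_⟩
  intro μ w hw hmu
  obtain ⟨i0, hi0⟩ := Finite.exists_max (fun i => ‖w i‖ / v i)
  set R := ‖w i0‖ / v i0 with hR
  have hRpos : 0 < R := by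
    obtain ⟨j, hj⟩ := Function.ne_iff.mp hw
    have hpos : 0 < ‖w j‖ / v j := div_pos (by simpa using hj) (hv j)
    exact lt_of_lt_of_le hpos (hi0 j)
  have hkey : ∀ j, ‖w j‖ ≤ R * v j := by
    intro j
    exact (div_le_iff₀ (hv j)).mp (hi0 j)
  have heq : (∑ j, ((F i0 j : ℂ) * w j)) = μ * w i0 := by
    have h := congrFun hmu i0
    simpa [Matrix.mulVec, dotProduct, Matrix.map_apply] using h
  have hsum : (∑ j, F i0 j * v j) = (2 + Real.sqrt 6) * v i0 := by
    have h := congrFun h1 i0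
    simpa [Matrix.mulVec, dotProduct] using h
  have hchain : ‖μ‖ * ‖w i0‖ ≤ (2 + Real.sqrt 6) * (R * v i0) := by
    calc ‖μ‖ * ‖w i0‖
        = ‖∑ j, (F i0 j : ℂ) * w j‖ := by rw [← norm_mul, heq]
      _ ≤ ∑ j, ‖(F i0 j : ℂ) * w j‖ := norm_sum_le _ _
      _ = ∑ j, F i0 j * ‖w j‖ := by
          refine Finset.sum_congr rfl fun j _ => ?_
          rw [norm_mul, Complex.norm_real, Real.norm_eq_abs, abs_of_nonneg (hFnn i0 j)]
      _ ≤ ∑ j, F i0 j * (R * v j) := by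
          refine Finset.sum_le_sum fun j _ => ?_
          exact mul_le_mul_of_nonneg_left (hkey j) (hFnn i0 j)
      _ = R * ∑ j, F i0 j * v j := by
          rw [Finset.mul_sum]; exact Finset.sum_congr rfl fun j _ => by ring
      _ = (2 + Real.sqrt 6) * (R * v i0) := by rw [hsum]; ring
  have habs : ‖w i0‖ = R * v i0 := by
    rw [hR, div_mul_cancel₀ _ (ne_of_gt (hv i0))]
  rw [habs] at hchain
  have hpos : 0 < R * v i0 := mul_pos hRpos (hv i0)
  exact le_of_mul_le_mul_right (by linarith) hpos
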